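/- Let g ≥ 0 and r ≥ 1 be integers and let y, t be complex numbers with 0 < |y| < 1 and 0 < |t| < |y|^{2r}. Set Z(u) = (1 − yu)^{2g}/((1 − u)(1 − y²u)). Then (−y)^{r²(1−g)} · ((1−y)^{2g}/(y²−1)) · Π_{i=1}^{r−1} Z(y^{2i}) · Π_{k=1}^{∞} Π_{i=−r}^{r−1} Z(y^{2i} tᵏ) = (−y)^{−r²(1−g)} · Π_{n=1}^{∞} [ (1 − y^{−2r+1} t^{n−1})^{2g} (1 − y^{2r−1} tⁿ)^{2g} / ((1 − y^{−2r} t^{n−1})(1 − y^{2r} tⁿ)(1 − tⁿ)²) · Π_{k=1}^{r−1} (1 − y^{−2k+1} t^{n−1})^{2g} (1 − y^{2k−1} tⁿ)^{2g} / ((1 − y^{−2k} t^{n−1})² (1 − y^{2k} tⁿ)²) ], where all infinite products over k ≥ 1 resp. n ≥ 1 converge absolutely. -/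

import Mathlib

open Finset Filter Asymptotics Topology

noncomputable def S12zf (g : ℕ) (y u : ℂ) : ℂ :=
  (1 - y * u) ^ (2 * g) / ((1 - u) * (1 - y ^ 2 * u))

noncomputable def S12af (g r : ℕ) (v u : ℂ) : ℂ :=
  ((1 - v ^ (2 * r - 1) * u) ^ (2 * g) / (1 - v ^ (2 * r) * u)) *
    ∏ k ∈ Finset.Icc 1 (r - 1), (1 - v ^ (2 * k - 1) * u) ^ (2 * g) / (1 - v ^ (2 * k) * u) ^ 2

noncomputable def S12bf (g r : ℕ) (y u : ℂ) : ℂ :=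
  ((1 - y ^ (2 * r - 1) * u) ^ (2 * g) / ((1 - y ^ (2 * r) * u) * (1 - u) ^ 2)) *
    ∏ k ∈ Finset.Icc 1 (r - 1), (1 - y ^ (2 * k - 1) * u) ^ (2 * g) / (1 - y ^ (2 * k) * u) ^ 2

lemma S12zf_nat (g : ℕ) (y u : ℂ) (m : ℕ) :
    S12zf g y (y ^ m * u)
      = (1 - y ^ (m + 1) * u) ^ (2 * g) / ((1 - y ^ m * u) * (1 - y ^ (m + 2) * u)) := by
  unfold S12zf
  rw [show y * (y ^ m * u) = y ^ (m + 1) * u by ring,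
    show y ^ 2 * (y ^ m * u) = y ^ (m + 2) * u by ring]

lemma S12zf_inv (g : ℕ) {y : ℂ} (v u : ℂ) (hv : y * v = 1) (m : ℕ) :
    S12zf g y (v ^ (m + 2) * u)
      = (1 - v ^ (m + 1) * u) ^ (2 * g) / ((1 - v ^ (m + 2) * u) * (1 - v ^ m * u)) := by
  unfold S12zf
  rw [show y * (v ^ (m + 2) * u) = v ^ (m + 1) * u from by
        linear_combination (v ^ (m + 1) * u) * hv,
      show y ^ 2 * (v ^ (m + 2) * u) = v ^ m * u from by
        linear_combination (y * v ^ (m + 1) * u + v ^ m * u) * hv]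

lemma S12Icc_succ {r : ℕ} (hr : 1 ≤ r) : Finset.Icc 1 r = insert r (Finset.Icc 1 (r - 1)) := by
  ext x; simp only [Finset.mem_Icc, Finset.mem_insert]; omega


lemma S12alg_af (A D C2 C3 P : ℂ) :
    (A / C2) * ((D / C3 ^ 2) * P) = (A / (C2 * C3)) * ((D / C3) * P) := by
  simp only [pow_two, div_eq_mul_inv, mul_inv]; ring

lemma S12alg_bf (A D C1 C3 E P : ℂ) :
    (A / (C1 * E)) * ((D / C3 ^ 2) * P) = (A / (C3 * C1)) * ((D / (C3 * E)) * P) := by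
  simp only [pow_two, div_eq_mul_inv, mul_inv]; ring

lemma S12af_succ (g r : ℕ) (hr : 1 ≤ r) (v u : ℂ) :
    S12af g (r + 1) v u
      = ((1 - v ^ (2 * r + 1) * u) ^ (2 * g)
            / ((1 - v ^ (2 * r + 2) * u) * (1 - v ^ (2 * r) * u))) * S12af g r v u := by
  unfold S12af
  rw [show 2 * (r + 1) - 1 = 2 * r + 1 by omega, show 2 * (r + 1) = 2 * r + 2 by omega,
    show r + 1 - 1 = r by omega, S12Icc_succ hr,
    Finset.prod_insert (by simp only [Finset.mem_Icc]; omega)]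
  exact S12alg_af _ _ _ _ _

lemma S12bf_succ (g r : ℕ) (hr : 1 ≤ r) (y u : ℂ) :
    S12bf g (r + 1) y u
      = ((1 - y ^ (2 * r + 1) * u) ^ (2 * g)
            / ((1 - y ^ (2 * r) * u) * (1 - y ^ (2 * r + 2) * u))) * S12bf g r y u := by
  unfold S12bf
  rw [show 2 * (r + 1) - 1 = 2 * r + 1 by omega, show 2 * (r + 1) = 2 * r + 2 by omega,
    show r + 1 - 1 = r by omega, S12Icc_succ hr,
    Finset.prod_insert (by simp only [Finset.mem_Icc]; omega)]
  exact S12alg_bf _ _ _ _ _ _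

lemma S12zpow_neg {y : ℂ} (a : ℤ) (m : ℕ) (h : a = -(m : ℤ)) : y ^ a = (y⁻¹) ^ m := by
  rw [h, zpow_neg, zpow_natCast, inv_pow]

lemma S12zpow_pos {y : ℂ} (a : ℤ) (m : ℕ) (h : a = (m : ℤ)) : y ^ a = y ^ m := by
  rw [h, zpow_natCast]

lemma S12key (g : ℕ) {y : ℂ} (hy : y ≠ 0) (u : ℂ) :
    ∀ r : ℕ, 1 ≤ r →
      ∏ i ∈ Finset.Icc (-(r : ℤ)) ((r : ℤ) - 1), S12zf g y (y ^ (2 * i) * u)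
        = S12af g r y⁻¹ u * S12bf g r y u := by
  have hv : y * y⁻¹ = 1 := mul_inv_cancel₀ hy
  intro r hr
  induction r, hr using Nat.le_induction with
  | base =>
      have hset : Finset.Icc (-(1 : ℤ)) ((1 : ℤ) - 1) = insert (-1 : ℤ) {0} := by
        ext x; simp only [Finset.mem_Icc, Finset.mem_insert, Finset.mem_singleton]; omega
      rw [show ((1 : ℕ) : ℤ) = (1 : ℤ) by norm_num, hset,
        Finset.prod_insert (by simp), Finset.prod_singleton]
      rw [show y ^ (2 * (-1 : ℤ)) = (y⁻¹) ^ (0 + 2) from S12zpow_neg _ _ (by norm_num),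
        show y ^ (2 * (0 : ℤ)) = y ^ (0 : ℕ) from S12zpow_pos _ _ (by norm_num)]
      rw [S12zf_inv g y⁻¹ u hv 0, S12zf_nat g y u 0]
      unfold S12af S12bf
      rw [show 2 * 1 - 1 = 0 + 1 by norm_num, show 2 * 1 = 0 + 2 by norm_num,
        show 1 - 1 = 0 by norm_num, Finset.Icc_eq_empty (by norm_num), Finset.prod_empty,
        Finset.prod_empty]
      rw [pow_zero, one_mul]
      simp only [pow_two, div_eq_mul_inv, mul_inv, mul_one]
      ring
  | succ r hr ih =>
      have hset : Finset.Icc (-((r : ℤ) + 1)) (((r : ℤ) + 1) - 1)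
          = insert (-(r : ℤ) - 1) (insert (r : ℤ) (Finset.Icc (-(r : ℤ)) ((r : ℤ) - 1))) := by
        ext x
        simp only [Finset.mem_Icc, Finset.mem_insert]
        omega
      rw [show ((r + 1 : ℕ) : ℤ) = (r : ℤ) + 1 by push_cast; ring, hset,
        Finset.prod_insert (by simp only [Finset.mem_insert, Finset.mem_Icc]; omega),
        Finset.prod_insert (by simp only [Finset.mem_Icc]; omega), ih]
      rw [show y ^ (2 * (-(r : ℤ) - 1)) = (y⁻¹) ^ (2 * r + 2) from S12zpow_neg _ _ (by omega),
        show y ^ (2 * (r : ℤ)) = y ^ (2 * r) from S12zpow_pos _ _ (by omega)]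
      rw [show 2 * r + 2 = 2 * r + 2 from rfl, S12zf_inv g y⁻¹ u hv (2 * r),
        S12zf_nat g y u (2 * r), S12af_succ g r hr, S12bf_succ g r hr]
      ring

lemma S12Rn_eq (g r : ℕ) (hr : 1 ≤ r) {y : ℂ} (t : ℂ) (n : ℕ) :
    ((1 - y ^ (-(2 * (r : ℤ)) + 1) * t ^ n) ^ (2 * g)
          * (1 - y ^ (2 * (r : ℤ) - 1) * t ^ (n + 1)) ^ (2 * g) /
        ((1 - y ^ (-(2 * (r : ℤ))) * t ^ n) * (1 - y ^ (2 * (r : ℤ)) * t ^ (n + 1))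
          * (1 - t ^ (n + 1)) ^ 2)) *
      ∏ k ∈ Finset.Icc 1 (r - 1),
        (1 - y ^ (-(2 * (k : ℤ)) + 1) * t ^ n) ^ (2 * g)
            * (1 - y ^ (2 * (k : ℤ) - 1) * t ^ (n + 1)) ^ (2 * g) /
          ((1 - y ^ (-(2 * (k : ℤ))) * t ^ n) ^ 2 * (1 - y ^ (2 * (k : ℤ)) * t ^ (n + 1)) ^ 2)
      = S12af g r y⁻¹ (t ^ n) * S12bf g r y (t ^ (n + 1)) := by
  rw [show y ^ (-(2 * (r : ℤ)) + 1) = (y⁻¹) ^ (2 * r - 1) from S12zpow_neg _ _ (by omega),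
    show y ^ (2 * (r : ℤ) - 1) = y ^ (2 * r - 1) from S12zpow_pos _ _ (by omega),
    show y ^ (-(2 * (r : ℤ))) = (y⁻¹) ^ (2 * r) from S12zpow_neg _ _ (by omega),
    show y ^ (2 * (r : ℤ)) = y ^ (2 * r) from S12zpow_pos _ _ (by omega)]
  have hprod : ∏ k ∈ Finset.Icc 1 (r - 1),
        (1 - y ^ (-(2 * (k : ℤ)) + 1) * t ^ n) ^ (2 * g)
            * (1 - y ^ (2 * (k : ℤ) - 1) * t ^ (n + 1)) ^ (2 * g) /
          ((1 - y ^ (-(2 * (k : ℤ))) * t ^ n) ^ 2 * (1 - y ^ (2 * (k : ℤ)) * t ^ (n + 1)) ^ 2)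
      = ∏ k ∈ Finset.Icc 1 (r - 1),
        ((1 - (y⁻¹) ^ (2 * k - 1) * t ^ n) ^ (2 * g) / (1 - (y⁻¹) ^ (2 * k) * t ^ n) ^ 2)
          * ((1 - y ^ (2 * k - 1) * t ^ (n + 1)) ^ (2 * g)
              / (1 - y ^ (2 * k) * t ^ (n + 1)) ^ 2) := by
    refine Finset.prod_congr rfl fun k hk => ?_
    have hk1 : 1 ≤ k := (Finset.mem_Icc.mp hk).1
    rw [show y ^ (-(2 * (k : ℤ)) + 1) = (y⁻¹) ^ (2 * k - 1) from S12zpow_neg _ _ (by omega),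
      show y ^ (2 * (k : ℤ) - 1) = y ^ (2 * k - 1) from S12zpow_pos _ _ (by omega),
      show y ^ (-(2 * (k : ℤ))) = (y⁻¹) ^ (2 * k) from S12zpow_neg _ _ (by omega),
      show y ^ (2 * (k : ℤ)) = y ^ (2 * k) from S12zpow_pos _ _ (by omega),
      mul_div_mul_comm]
  rw [hprod, Finset.prod_mul_distrib]
  unfold S12af S12bf
  simp only [div_eq_mul_inv, mul_inv, inv_pow]
  ring

lemma S12zf_nat' (g : ℕ) (y : ℂ) (m : ℕ) :
    S12zf g y (y ^ m) = (1 - y ^ (m + 1)) ^ (2 * g) / ((1 - y ^ m) * (1 - y ^ (m + 2))) := by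
  have h := S12zf_nat g y 1 m
  simpa using h

lemma S12core (g r : ℕ) {y : ℂ} (hy : y ≠ 0) :
    (1 - (y⁻¹) ^ (2 * r + 1)) ^ (2 * g)
        / ((1 - (y⁻¹) ^ (2 * r + 2)) * (1 - (y⁻¹) ^ (2 * r)))
      = (-y) ^ (2 * (2 * (r : ℤ) + 1) * (1 - (g : ℤ))) * S12zf g y (y ^ (2 * r)) := by
  have hny : (-y) ≠ 0 := neg_ne_zero.mpr hy
  rw [S12zf_nat' g y (2 * r)]
  rw [show (2 * (2 * (r : ℤ) + 1) * (1 - (g : ℤ)))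
        = ((4 * r + 2 : ℕ) : ℤ) - (((4 * r + 2) * g : ℕ) : ℤ) from by push_cast; ring,
    zpow_sub₀ hny, zpow_natCast, zpow_natCast,
    Even.neg_pow ⟨2 * r + 1, by ring⟩, Even.neg_pow ⟨(2 * r + 1) * g, by ring⟩]
  have key : ∀ m : ℕ, (1 : ℂ) - (y⁻¹) ^ m = (y ^ m)⁻¹ * (y ^ m - 1) := fun m => by
    rw [inv_pow, mul_sub, inv_mul_cancel₀ (pow_ne_zero _ hy)]; ring
  rw [key, key, key, mul_pow,
    show ((y : ℂ) ^ (2 * r + 1) - 1) ^ (2 * g) = (1 - y ^ (2 * r + 1)) ^ (2 * g) from by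
      rw [← neg_sub]; exact Even.neg_pow (even_two_mul g) _,
    show ((y : ℂ) ^ (2 * r + 2) - 1) = -(1 - y ^ (2 * r + 2)) from by ring,
    show ((y : ℂ) ^ (2 * r) - 1) = -(1 - y ^ (2 * r)) from by ring, inv_pow]
  simp only [div_eq_mul_inv, mul_inv, inv_inv, mul_neg, neg_mul, neg_neg]
  ring

lemma S12bdry (g : ℕ) {y : ℂ} (hy : y ≠ 0) :
    ∀ r : ℕ, 1 ≤ r →
      S12af g r y⁻¹ 1
        = (-y) ^ (2 * ((r : ℤ) ^ 2 * (1 - (g : ℤ)))) * ((1 - y) ^ (2 * g) / (y ^ 2 - 1)) *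
            ∏ i ∈ Finset.Icc 1 (r - 1), S12zf g y (y ^ (2 * i)) := by
  have hny : (-y) ≠ 0 := neg_ne_zero.mpr hy
  have key : ∀ m : ℕ, (1 : ℂ) - (y⁻¹) ^ m = (y ^ m)⁻¹ * (y ^ m - 1) := fun m => by
    rw [inv_pow, mul_sub, inv_mul_cancel₀ (pow_ne_zero _ hy)]; ring
  intro r hr
  induction r, hr using Nat.le_induction with
  | base =>
      unfold S12af
      rw [show 2 * 1 - 1 = 1 by norm_num, show 2 * 1 = 2 by norm_num,
        show 1 - 1 = 0 by norm_num, Finset.Icc_eq_empty (by norm_num), Finset.prod_empty,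
        Finset.prod_empty]
      push_cast
      rw [show (2 * ((1 : ℤ) * (1 - (g : ℤ)))) = ((2 : ℕ) : ℤ) - ((2 * g : ℕ) : ℤ) from by
          push_cast; ring,
        zpow_sub₀ hny, zpow_natCast, zpow_natCast,
        Even.neg_pow ⟨1, by ring⟩, Even.neg_pow ⟨g, by ring⟩]
      simp only [mul_one, pow_one]
      rw [show (1 : ℂ) - y⁻¹ = y⁻¹ * (y - 1) from by simpa using key 1, key 2, mul_pow,
        show ((y : ℂ) - 1) ^ (2 * g) = (1 - y) ^ (2 * g) from by
          rw [← neg_sub]; exact Even.neg_pow (even_two_mul g) _,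
        show ((y : ℂ) ^ 2 - 1) = -(1 - y ^ 2) from by ring]
      simp only [div_eq_mul_inv, mul_inv, inv_inv, inv_pow]
      ring
  | succ r hr ih =>
      rw [S12af_succ g r hr, ih, Nat.add_sub_cancel, S12Icc_succ hr,
        Finset.prod_insert (by simp only [Finset.mem_Icc]; omega)]
      simp only [mul_one]
      rw [S12core g r hy]
      push_cast
      rw [show (-y) ^ (2 * (((r : ℤ) + 1) ^ 2 * (1 - (g : ℤ))))
            = (-y) ^ (2 * ((r : ℤ) ^ 2 * (1 - (g : ℤ))))
                * (-y) ^ (2 * (2 * (r : ℤ) + 1) * (1 - (g : ℤ))) from by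
          rw [← zpow_add₀ hny]; congr 1; ring]
      ring

lemma S12one_sub_ne {z : ℂ} (h : ‖z‖ ≠ 1) : (1 : ℂ) - z ≠ 0 := by
  intro h0
  apply h
  have hz : z = 1 := by linear_combination -h0
  rw [hz]; simp

lemma S12multipliable {f : ℕ → ℂ} (h : Summable fun n => ‖f n - 1‖) (h0 : ∀ n, f n ≠ 0) :
    Multipliable f := by
  have hlog : Summable fun n => Complex.log (f n) := by
    have hten : Filter.Tendsto (fun n => ‖f n - 1‖) Filter.atTop (nhds 0) :=
      h.tendsto_atTop_zero
    have hev : ∀ᶠ n in Filter.atTop, ‖Complex.log (f n)‖ ≤ 3 / 2 * ‖f n - 1‖ := by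
      filter_upwards [hten.eventually_lt_const (by norm_num : (0:ℝ) < 1/2)] with n hn
      have h2 := Complex.norm_log_one_add_half_le_self (z := f n - 1) (by linarith)
      rw [show (1 : ℂ) + (f n - 1) = f n from by ring] at h2
      exact h2
    exact Summable.of_norm_bounded_eventually_nat
      (h.mul_left _) hev
  exact Complex.multipliable_of_summable_log hlog

lemma S12summable {F : ℂ → ℂ} (hF : DifferentiableAt ℂ F 0) (hF0 : F 0 = 1) {t : ℂ}
    (ht : ‖t‖ < 1) (m : ℕ) : Summable fun n : ℕ => ‖F (t ^ (n + m)) - 1‖ := by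
  have h1 : (fun u : ℂ => F u - 1) =O[nhds 0] fun u => u := by
    simpa [hF0] using hF.isBigO_sub
  have h2 : Filter.Tendsto (fun n : ℕ => t ^ (n + m)) Filter.atTop (nhds 0) :=
    (tendsto_pow_atTop_nhds_zero_of_norm_lt_one ht).comp (Filter.tendsto_add_atTop_nat m)
  have h3 := (h1.comp_tendsto h2).norm_left
  have h4 : Summable fun n : ℕ => ‖t‖ ^ (n + m) :=
    (summable_nat_add_iff m).mpr (summable_geometric_of_lt_one (norm_nonneg t) ht)
  refine summable_of_isBigO_nat h4 (h3.trans (Asymptotics.isBigO_of_le _ fun n => ?_))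
  simp only [Function.comp]
  rw [norm_pow, Real.norm_eq_abs, abs_of_nonneg (by positivity)]

lemma S12af_diff (g r : ℕ) (v : ℂ) : DifferentiableAt ℂ (fun u => S12af g r v u) 0 := by
  unfold S12af
  apply DifferentiableAt.mul
  · exact DifferentiableAt.div
      (((differentiableAt_const _).sub (differentiableAt_fun_id.const_mul _)).pow _)
      ((differentiableAt_const _).sub (differentiableAt_fun_id.const_mul _))
      (by norm_num)
  · exact DifferentiableAt.fun_finsetProd fun k _ => DifferentiableAt.div
      (((differentiableAt_const _).sub (differentiableAt_fun_id.const_mul _)).pow _)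
      (((differentiableAt_const _).sub (differentiableAt_fun_id.const_mul _)).pow _)
      (by norm_num)

lemma S12bf_diff (g r : ℕ) (y : ℂ) : DifferentiableAt ℂ (fun u => S12bf g r y u) 0 := by
  unfold S12bf
  apply DifferentiableAt.mul
  · exact DifferentiableAt.div
      (((differentiableAt_const _).sub (differentiableAt_fun_id.const_mul _)).pow _)
      (((differentiableAt_const _).sub (differentiableAt_fun_id.const_mul _)).mul
        (((differentiableAt_const _).sub differentiableAt_fun_id).pow _))
      (by norm_num)
  · exact DifferentiableAt.fun_finsetProd fun k _ => DifferentiableAt.div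
      (((differentiableAt_const _).sub (differentiableAt_fun_id.const_mul _)).pow _)
      (((differentiableAt_const _).sub (differentiableAt_fun_id.const_mul _)).pow _)
      (by norm_num)

lemma S12af_zero (g r : ℕ) (v : ℂ) : S12af g r v 0 = 1 := by simp [S12af]

lemma S12bf_zero (g r : ℕ) (y : ℂ) : S12bf g r y 0 = 1 := by simp [S12bf]

lemma S12ne1 {y t : ℂ} (hy1 : ‖y‖ < 1) (ht1 : ‖t‖ < 1) (j m : ℕ) (hm : 1 ≤ m) :
    (1 : ℂ) - y ^ j * t ^ m ≠ 0 := by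
  apply S12one_sub_ne
  apply ne_of_lt
  rw [norm_mul, norm_pow, norm_pow]
  calc ‖y‖ ^ j * ‖t‖ ^ m ≤ 1 * ‖t‖ ^ 1 :=
        mul_le_mul (pow_le_one₀ (norm_nonneg y) hy1.le)
          (pow_le_pow_of_le_one (norm_nonneg t) ht1.le hm) (by positivity) one_pos.le
    _ = ‖t‖ := by rw [one_mul, pow_one]
    _ < 1 := ht1

lemma S12tne {t : ℂ} (ht1 : ‖t‖ < 1) (m : ℕ) (hm : 1 ≤ m) : (1 : ℂ) - t ^ m ≠ 0 := by
  apply S12one_sub_ne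
  apply ne_of_lt
  rw [norm_pow]
  calc ‖t‖ ^ m ≤ ‖t‖ ^ 1 := pow_le_pow_of_le_one (norm_nonneg t) ht1.le hm
    _ < 1 := by rwa [pow_one]

lemma S12ne2 {y t : ℂ} (hy0 : y ≠ 0) (hy1 : ‖y‖ < 1) {r : ℕ} (ht : ‖t‖ < ‖y‖ ^ (2 * r))
    (j m : ℕ) (hj : j ≤ 2 * r) (h : 1 ≤ m ∨ 1 ≤ j) : (1 : ℂ) - (y⁻¹) ^ j * t ^ m ≠ 0 := by
  apply S12one_sub_ne
  have hy0' : 0 < ‖y‖ := norm_pos_iff.mpr hy0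
  have hyi : 1 ≤ ‖y‖⁻¹ := by
    rw [le_inv_comm₀ one_pos hy0']
    simpa using hy1.le
  have ht1 : ‖t‖ < 1 := lt_of_lt_of_le ht (pow_le_one₀ hy0'.le hy1.le)
  rcases Nat.eq_zero_or_pos m with hm | hm
  · have hj1 : 1 ≤ j := by omega
    rw [hm, pow_zero, mul_one, norm_pow, norm_inv]
    have h1 : 1 < ‖y‖⁻¹ := by
      rw [lt_inv_comm₀ one_pos hy0']
      simpa using hy1
    exact ne_of_gt (one_lt_pow₀ h1 (by omega))
  · apply ne_of_lt
    rw [norm_mul, norm_pow, norm_pow, norm_inv]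
    have e1 : ‖y‖⁻¹ ^ j ≤ ‖y‖⁻¹ ^ (2 * r) := pow_le_pow_right₀ hyi hj
    have e2 : ‖t‖ ^ m ≤ ‖t‖ := by
      calc ‖t‖ ^ m ≤ ‖t‖ ^ 1 := pow_le_pow_of_le_one (norm_nonneg t) ht1.le hm
        _ = ‖t‖ := pow_one _
    calc ‖y‖⁻¹ ^ j * ‖t‖ ^ m ≤ ‖y‖⁻¹ ^ (2 * r) * ‖t‖ :=
          mul_le_mul e1 e2 (by positivity) (by positivity)
      _ < 1 := by
          rw [inv_pow, inv_mul_eq_div, div_lt_one (pow_pos hy0' _)]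
          exact ht

lemma S12af_ne (g r : ℕ) (hr : 1 ≤ r) {y t : ℂ} (hy0 : y ≠ 0) (hy1 : ‖y‖ < 1)
    (ht : ‖t‖ < ‖y‖ ^ (2 * r)) (n : ℕ) : S12af g r y⁻¹ (t ^ n) ≠ 0 := by
  unfold S12af
  apply mul_ne_zero
  · exact div_ne_zero
      (pow_ne_zero _ (S12ne2 hy0 hy1 ht (2 * r - 1) n (by omega) (by omega)))
      (S12ne2 hy0 hy1 ht (2 * r) n (by omega) (by omega))
  · rw [Finset.prod_ne_zero_iff]
    intro k hk
    have hk1 := Finset.mem_Icc.mp hk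
    exact div_ne_zero
      (pow_ne_zero _ (S12ne2 hy0 hy1 ht (2 * k - 1) n (by omega) (by omega)))
      (pow_ne_zero _ (S12ne2 hy0 hy1 ht (2 * k) n (by omega) (by omega)))

lemma S12bf_ne (g r : ℕ) {y t : ℂ} (hy1 : ‖y‖ < 1) (ht1 : ‖t‖ < 1) (n : ℕ) :
    S12bf g r y (t ^ (n + 1)) ≠ 0 := by
  unfold S12bf
  apply mul_ne_zero
  · exact div_ne_zero (pow_ne_zero _ (S12ne1 hy1 ht1 _ _ (by omega)))
      (mul_ne_zero (S12ne1 hy1 ht1 _ _ (by omega))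
        (pow_ne_zero _ (S12tne ht1 _ (by omega))))
  · rw [Finset.prod_ne_zero_iff]
    intro k hk
    exact div_ne_zero (pow_ne_zero _ (S12ne1 hy1 ht1 _ _ (by omega)))
      (pow_ne_zero _ (S12ne1 hy1 ht1 _ _ (by omega)))


set_option maxHeartbeats 1000000

/-- Let `g ≥ 0`, `r ≥ 1` be integers and `y, t` complex numbers with `0 < |y| < 1` and
`0 < |t| < |y|^{2r}`.  Set `Z(u) = (1 − yu)^{2g}/((1 − u)(1 − y²u))`.  Then
`(−y)^{r²(1−g)}·((1−y)^{2g}/(y²−1))·Π_{i=1}^{r−1} Z(y^{2i})·Π_{k=1}^∞ Π_{i=−r}^{r−1} Z(y^{2i}tᵏ)`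
equals
`(−y)^{−r²(1−g)}·Π_{n=1}^∞ [(1−y^{−2r+1}t^{n−1})^{2g}(1−y^{2r−1}tⁿ)^{2g}/((1−y^{−2r}t^{n−1})(1−y^{2r}tⁿ)(1−tⁿ)²)·Π_{k=1}^{r−1}(1−y^{−2k+1}t^{n−1})^{2g}(1−y^{2k−1}tⁿ)^{2g}/((1−y^{−2k}t^{n−1})²(1−y^{2k}tⁿ)²)]`,
where the infinite products over `k ≥ 1` resp. `n ≥ 1` converge absolutely.
(The products over `k ≥ 1` resp. `n ≥ 1` are indexed below by `ℕ`, shifted by one.) -/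
theorem stmt12 (g r : ℕ) (hr : 1 ≤ r) (y t : ℂ)
    (hy0 : 0 < ‖y‖) (hy1 : ‖y‖ < 1)
    (ht0 : 0 < ‖t‖) (ht : ‖t‖ < ‖y‖ ^ (2 * r)) :
    let Z : ℂ → ℂ := fun u => (1 - y * u) ^ (2 * g) / ((1 - u) * (1 - y ^ 2 * u))
    let L : ℕ → ℂ := fun k =>
      ∏ i ∈ Finset.Icc (-(r : ℤ)) ((r : ℤ) - 1), Z (y ^ (2 * i) * t ^ (k + 1))
    let Rn : ℕ → ℂ := fun n =>
      ((1 - y ^ (-(2 * (r : ℤ)) + 1) * t ^ n) ^ (2 * g)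
          * (1 - y ^ (2 * (r : ℤ) - 1) * t ^ (n + 1)) ^ (2 * g) /
        ((1 - y ^ (-(2 * (r : ℤ))) * t ^ n) * (1 - y ^ (2 * (r : ℤ)) * t ^ (n + 1))
          * (1 - t ^ (n + 1)) ^ 2)) *
      ∏ k ∈ Finset.Icc 1 (r - 1),
        (1 - y ^ (-(2 * (k : ℤ)) + 1) * t ^ n) ^ (2 * g)
            * (1 - y ^ (2 * (k : ℤ) - 1) * t ^ (n + 1)) ^ (2 * g) /
          ((1 - y ^ (-(2 * (k : ℤ))) * t ^ n) ^ 2 * (1 - y ^ (2 * (k : ℤ)) * t ^ (n + 1)) ^ 2)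
    Summable (fun k => ‖L k - 1‖) ∧
    Summable (fun n => ‖Rn n - 1‖) ∧
    (-y) ^ ((r : ℤ) ^ 2 * (1 - (g : ℤ))) * ((1 - y) ^ (2 * g) / (y ^ 2 - 1)) *
        (∏ i ∈ Finset.Icc 1 (r - 1), Z (y ^ (2 * i))) * (∏' k, L k)
      = (-y) ^ (-((r : ℤ) ^ 2 * (1 - (g : ℤ)))) * ∏' n, Rn n := by
  intro Z L Rn
  have hy : y ≠ 0 := by
    intro h; rw [h] at hy0; simp at hy0
  have hny : (-y) ≠ 0 := neg_ne_zero.mpr hy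
  have hy1' : ‖y‖ < 1 := by exact hy1
  have ht' : ‖t‖ < ‖y‖ ^ (2 * r) := by exact ht
  have ht1 : ‖t‖ < 1 := lt_of_lt_of_le ht' (pow_le_one₀ (norm_nonneg y) hy1'.le)
  have hL : ∀ k, L k = S12af g r y⁻¹ (t ^ (k + 1)) * S12bf g r y (t ^ (k + 1)) := fun k =>
    (show L k = ∏ i ∈ Finset.Icc (-(r : ℤ)) ((r : ℤ) - 1),
        S12zf g y (y ^ (2 * i) * t ^ (k + 1)) from rfl).trans (S12key g hy (t ^ (k + 1)) r hr)
  have hRn : ∀ n, Rn n = S12af g r y⁻¹ (t ^ n) * S12bf g r y (t ^ (n + 1)) := fun n =>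
    S12Rn_eq g r hr t n
  refine ⟨?_, ?_, ?_⟩
  · have hdiff : DifferentiableAt ℂ
        (fun u => ∏ i ∈ Finset.Icc (-(r : ℤ)) ((r : ℤ) - 1), S12zf g y (y ^ (2 * i) * u)) 0 := by
      apply DifferentiableAt.fun_finsetProd
      intro i _
      unfold S12zf
      exact DifferentiableAt.div
        (((differentiableAt_const _).sub
          ((differentiableAt_fun_id.const_mul _).const_mul _)).pow _)
        (((differentiableAt_const _).sub (differentiableAt_fun_id.const_mul _)).mul
          ((differentiableAt_const _).sub
            ((differentiableAt_fun_id.const_mul _).const_mul _)))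
        (by norm_num)
    have hzero : (fun u => ∏ i ∈ Finset.Icc (-(r : ℤ)) ((r : ℤ) - 1),
        S12zf g y (y ^ (2 * i) * u)) 0 = 1 := by
      simp [S12zf]
    have hs := S12summable hdiff hzero ht1 1
    have heq : (fun k : ℕ => ‖L k - 1‖)
        = fun n : ℕ => ‖(fun u => ∏ i ∈ Finset.Icc (-(r : ℤ)) ((r : ℤ) - 1),
            S12zf g y (y ^ (2 * i) * u)) (t ^ (n + 1)) - 1‖ := by
      funext k
      rfl
    rw [heq]
    exact hs
  · have hdiff : DifferentiableAt ℂ (fun u => S12af g r y⁻¹ u * S12bf g r y (t * u)) 0 := by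
      apply (S12af_diff g r y⁻¹).mul
      have h2 : DifferentiableAt ℂ (fun u : ℂ => t * u) 0 := differentiableAt_fun_id.const_mul t
      have h3 : DifferentiableAt ℂ (fun w => S12bf g r y w) (t * 0) := by
        simpa using S12bf_diff g r y
      exact h3.comp 0 h2
    have hzero : (fun u => S12af g r y⁻¹ u * S12bf g r y (t * u)) 0 = 1 := by
      simp [S12af_zero, S12bf_zero]
    have hs := S12summable hdiff hzero ht1 0
    have heq : (fun n : ℕ => ‖Rn n - 1‖)
        = fun n : ℕ => ‖(fun u => S12af g r y⁻¹ u * S12bf g r y (t * u)) (t ^ (n + 0)) - 1‖ := by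
      funext n
      rw [hRn n,
        show t ^ (n + 1) = t * t ^ (n + 0) from by rw [add_zero, pow_succ, mul_comm],
        show t ^ n = t ^ (n + 0) from by rw [add_zero]]
    rw [heq]
    exact hs
  · have hmA : Multipliable (fun n : ℕ => S12af g r y⁻¹ (t ^ n)) := by
      apply S12multipliable
      · have hs := S12summable (S12af_diff g r y⁻¹) (S12af_zero g r y⁻¹) ht1 0
        simpa only [add_zero] using hs
      · exact fun n => S12af_ne g r hr hy hy1' ht' n
    have hmB : Multipliable (fun n : ℕ => S12bf g r y (t ^ (n + 1))) := by
      apply S12multipliable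
      · exact S12summable (S12bf_diff g r y) (S12bf_zero g r y) ht1 1
      · exact fun n => S12bf_ne g r hy1' ht1 n
    have hmA' : Multipliable (fun n : ℕ => S12af g r y⁻¹ (t ^ (n + 1))) := by
      apply S12multipliable
      · exact S12summable (S12af_diff g r y⁻¹) (S12af_zero g r y⁻¹) ht1 1
      · exact fun n => S12af_ne g r hr hy hy1' ht' (n + 1)
    have e1 : ∏' n, Rn n
        = ∏' n, (S12af g r y⁻¹ (t ^ n) * S12bf g r y (t ^ (n + 1))) := tprod_congr hRn
    have e2 : ∏' n, (S12af g r y⁻¹ (t ^ n) * S12bf g r y (t ^ (n + 1)))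
        = (∏' n, S12af g r y⁻¹ (t ^ n)) * ∏' n, S12bf g r y (t ^ (n + 1)) :=
      Multipliable.tprod_mul hmA hmB
    have e3 : ∏' n, S12af g r y⁻¹ (t ^ n)
        = S12af g r y⁻¹ (t ^ 0) * ∏' n, S12af g r y⁻¹ (t ^ (n + 1)) :=
      tprod_eq_zero_mul' hmA'
    have htR : ∏' n, Rn n
        = (S12af g r y⁻¹ (t ^ 0) * ∏' n, S12af g r y⁻¹ (t ^ (n + 1)))
            * ∏' n, S12bf g r y (t ^ (n + 1)) := by
      rw [e1, e2, e3]
    have e4 : ∏' k, L k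
        = ∏' k, (S12af g r y⁻¹ (t ^ (k + 1)) * S12bf g r y (t ^ (k + 1))) := tprod_congr hL
    have e5 : ∏' k, (S12af g r y⁻¹ (t ^ (k + 1)) * S12bf g r y (t ^ (k + 1)))
        = (∏' n, S12af g r y⁻¹ (t ^ (n + 1))) * ∏' n, S12bf g r y (t ^ (n + 1)) :=
      Multipliable.tprod_mul hmA' hmB
    have htL : ∏' k, L k
        = (∏' n, S12af g r y⁻¹ (t ^ (n + 1))) * ∏' n, S12bf g r y (t ^ (n + 1)) := by
      rw [e4, e5]
    rw [htL, htR]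
    have hb : S12af g r y⁻¹ (t ^ 0)
        = (-y) ^ (2 * ((r : ℤ) ^ 2 * (1 - (g : ℤ)))) * ((1 - y) ^ (2 * g) / (y ^ 2 - 1)) *
            ∏ i ∈ Finset.Icc 1 (r - 1), S12zf g y (y ^ (2 * i)) := by
      rw [pow_zero]; exact S12bdry g hy r hr
    rw [hb]
    have hZp : (∏ i ∈ Finset.Icc 1 (r - 1), Z (y ^ (2 * i)))
        = ∏ i ∈ Finset.Icc 1 (r - 1), S12zf g y (y ^ (2 * i)) := rfl
    rw [hZp]
    have hzp : (-y) ^ ((r : ℤ) ^ 2 * (1 - (g : ℤ)))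
        = (-y) ^ (-((r : ℤ) ^ 2 * (1 - (g : ℤ))))
            * (-y) ^ (2 * ((r : ℤ) ^ 2 * (1 - (g : ℤ)))) := by
      rw [← zpow_add₀ hny]; congr 1; ring
    rw [hzp]
    ring
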